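/- Let r ≥ 2 and Φ : Fin r × Fin r → ℝ. If Φ_{ii} < 0 for all i and (2/(r-1))Φ_{ii} + Φ_{ij} + Φ_{ji} < 0 for all i ≠ j, then for every i and every subset S ⊆ {1,…,r}\{i}, Φ_{ii} + (1/2)∑_{j∈S}(Φ_{ij} + Φ_{ji}) < 0. -/

import Mathlib

theorem tuan_implies_main_scalar {r : ℕ} (hr : 2 ≤ r) (Φ : Fin r × Fin r → ℝ)
    (hdiag : ∀ i, Φ (i, i) < 0)
    (hoff : ∀ i j, i ≠ j → (2 / ((r : ℝ) - 1)) * Φ (i, i) + Φ (i, j) + Φ (j, i) < 0) :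
    ∀ i : Fin r, ∀ S : Finset (Fin r), i ∉ S →
      Φ (i, i) + (1 / 2) * ∑ j ∈ S, (Φ (i, j) + Φ (j, i)) < 0 := by
  intro i S hiS
  rcases S.eq_empty_or_nonempty with rfl | hS
  · simpa using hdiag i
  · have hr1 : (0:ℝ) < (r:ℝ) - 1 := by
      have : (2:ℝ) ≤ (r:ℝ) := by exact_mod_cast hr
      linarith
    have hsum : ∑ j ∈ S, ((2 / ((r : ℝ) - 1)) * Φ (i, i) + (Φ (i, j) + Φ (j, i))) < 0 := by
      have := Finset.sum_lt_sum_of_nonempty hS (f := fun j =>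
        (2 / ((r : ℝ) - 1)) * Φ (i, i) + (Φ (i, j) + Φ (j, i))) (g := fun _ => (0:ℝ)) ?_
      · simpa using this
      · intro j hj
        have hij : i ≠ j := fun h => hiS (h ▸ hj)
        have := hoff i j hij
        linarith
    have hsum' : (S.card : ℝ) * ((2 / ((r : ℝ) - 1)) * Φ (i, i))
        + ∑ j ∈ S, (Φ (i, j) + Φ (j, i)) < 0 := by
      rw [Finset.sum_add_distrib, Finset.sum_const, nsmul_eq_mul] at hsum
      linarith
    have hcard : S.card ≤ r - 1 := by
      have hsub : S ⊆ Finset.univ.erase i := by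
        intro j hj
        exact Finset.mem_erase.mpr ⟨fun h => hiS (h ▸ hj), Finset.mem_univ j⟩
      have := Finset.card_le_card hsub
      simpa [Finset.card_erase_of_mem] using this
    have hcard' : (S.card : ℝ) ≤ (r : ℝ) - 1 := by
      have : (S.card : ℝ) ≤ ((r - 1 : ℕ) : ℝ) := by exact_mod_cast hcard
      have h1 : (1:ℕ) ≤ r := le_trans (by norm_num) hr
      rw [Nat.cast_sub h1] at this
      simpa using this
    have key : Φ (i, i) * (1 - (S.card : ℝ) / ((r:ℝ) - 1)) ≤ 0 := by
      have h1 : 0 ≤ 1 - (S.card : ℝ) / ((r:ℝ) - 1) := by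
        rw [sub_nonneg, div_le_one hr1]; exact hcard'
      exact mul_nonpos_of_nonpos_of_nonneg (le_of_lt (hdiag i)) h1
    have expand : (S.card : ℝ) * ((2 / ((r : ℝ) - 1)) * Φ (i, i))
        = 2 * ((S.card : ℝ) / ((r:ℝ) - 1)) * Φ (i, i) := by
      field_simp
    rw [expand] at hsum'
    nlinarith [hsum', key]
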